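/- arXiv:2102.06849 — 4 statements merged into one kernel-verified Lean document; each statement's English description precedes it below -/
import Mathlib

section
/- For the temperature-scaling transformation φ_i(z) = z_i^α / ∑_j z_j^α with real α > 1, for every z in the probability simplex and every j ∈ [m], max_i φ_i(z) − φ_j(z) ≥ max_i z_i − z_j. -/
/-- Temperature scaling with `α > 1` satisfies the margin condition:
for every `j`, `max_i φ_i(z) − φ_j(z) ≥ max_i z_i − z_j`. -/
theorem stmt3 {m : ℕ} [NeZero m] (α : ℝ) (hα : 1 < α)
    (z : Fin m → ℝ) (hz : ∀ i, 0 ≤ z i) (hzsum : ∑ i, z i = 1)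
    (φ : Fin m → ℝ) (hφ : ∀ i, φ i = z i ^ α / ∑ j, z j ^ α) :
    ∀ j, Finset.univ.sup' Finset.univ_nonempty z - z j ≤
      Finset.univ.sup' Finset.univ_nonempty φ - φ j := by
  intro j
  obtain ⟨i, -, hi⟩ := Finset.exists_mem_eq_sup' Finset.univ_nonempty z
  have hmax : ∀ k, z k ≤ z i := fun k => hi ▸ Finset.le_sup' z (Finset.mem_univ k)
  have hα1 : (0:ℝ) ≤ α - 1 := by linarith
  have hsplit : ∀ k, z k ^ α = z k ^ (α - 1) * z k := by
    intro k
    have h := Real.rpow_add_of_nonneg (hz k) hα1 zero_le_one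
    rw [Real.rpow_one, show α - 1 + 1 = α by ring] at h
    exact h
  set S : ℝ := ∑ k, z k ^ α with hS
  have hSpos : 0 < S := by
    obtain ⟨k, hk⟩ : ∃ k, 0 < z k := by
      by_contra h
      push_neg at h
      have : ∀ k, z k = 0 := fun k => le_antisymm (h k) (hz k)
      simp [this] at hzsum
    exact Finset.sum_pos' (fun l _ => Real.rpow_nonneg (hz l) α)
      ⟨k, Finset.mem_univ k, Real.rpow_pos_of_pos hk α⟩
  have hSle : S ≤ z i ^ (α - 1) := by
    calc S = ∑ k, z k ^ (α - 1) * z k := by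
            exact Finset.sum_congr rfl fun k _ => hsplit k
      _ ≤ ∑ k, z i ^ (α - 1) * z k := by
            refine Finset.sum_le_sum fun k _ => ?_
            exact mul_le_mul_of_nonneg_right
              (Real.rpow_le_rpow (hz k) (hmax k) hα1) (hz k)
      _ = z i ^ (α - 1) := by rw [← Finset.mul_sum, hzsum, mul_one]
  have key : z i - z j ≤ φ i - φ j := by
    rw [hφ i, hφ j, div_sub_div_same, le_div_iff₀ hSpos]
    have h1 : (z i - z j) * S ≤ (z i - z j) * z i ^ (α - 1) :=
      mul_le_mul_of_nonneg_left hSle (by linarith [hmax j])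
    have h2 : z j ^ α ≤ z i ^ (α - 1) * z j := by
      rw [hsplit j]
      exact mul_le_mul_of_nonneg_right (Real.rpow_le_rpow (hz j) (hmax j) hα1) (hz j)
    have h3 : z i ^ (α - 1) * z i = z i ^ α := (hsplit i).symm
    nlinarith
  have hφsup : φ i ≤ Finset.univ.sup' Finset.univ_nonempty φ :=
    Finset.le_sup' φ (Finset.mem_univ i)
  rw [← hi] at *
  linarith
end

section
/- Suppose p^φ: X → Δ^m satisfies, for all x: (i) argmax_y p^φ_y(x) = argmax_y p*_y(x), and (ii) max_i p^φ_i(x) − p^φ_j(x) ≥ max_i p*_i(x) − p*_j(x) for all j ∈ [m]. Then for every classifier ĥ: X → [m], the excess risk R(ĥ) − R(h*) with respect to p* is at most R^φ(ĥ) − R^φ(h*), where R^φ denotes the 0-1 risk computed with weights p^φ in place of p*. -/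
open MeasureTheory

/-- If `pφ` preserves the argmax set of `p` and satisfies the margin condition,
then the excess risk of any classifier w.r.t. `p` is bounded by its excess risk
w.r.t. `pφ`. -/
theorem stmt6 {X : Type*} [MeasurableSpace X] (μ : Measure X) [IsProbabilityMeasure μ]
    {m : ℕ} [NeZero m] (p pφ : X → Fin m → ℝ)
    (hpmeas : ∀ i, Measurable fun x => p x i)
    (hpφmeas : ∀ i, Measurable fun x => pφ x i)
    (hp0 : ∀ x i, 0 ≤ p x i) (hp1 : ∀ x, ∑ i, p x i = 1)
    (hpφ0 : ∀ x i, 0 ≤ pφ x i) (hpφ1 : ∀ x, ∑ i, pφ x i = 1)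
    (hargmax : ∀ x, {i | ∀ j, p x j ≤ p x i} = {i | ∀ j, pφ x j ≤ pφ x i})
    (hmargin : ∀ x j, Finset.univ.sup' Finset.univ_nonempty (p x) - p x j ≤
      Finset.univ.sup' Finset.univ_nonempty (pφ x) - pφ x j)
    (hstar : X → Fin m) (hstarmeas : Measurable hstar)
    (hstarmax : ∀ x j, p x j ≤ p x (hstar x))
    (h : X → Fin m) (hmeas : Measurable h) :
    (∫ x, ∑ i, p x i * (if h x = i then 0 else 1) ∂μ) -
      (∫ x, ∑ i, p x i * (if hstar x = i then 0 else 1) ∂μ) ≤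
    (∫ x, ∑ i, pφ x i * (if h x = i then 0 else 1) ∂μ) -
      (∫ x, ∑ i, pφ x i * (if hstar x = i then 0 else 1) ∂μ) := by

  -- rewrite each sum as (∑ q) - q (g x)
  have esum : ∀ (q : Fin m → ℝ) (k : Fin m),
      (∑ i, q i * (if k = i then (0:ℝ) else 1)) = (∑ i, q i) - q k := by
    intro q k
    have : ∀ i, q i * (if k = i then (0:ℝ) else 1) = q i - (if k = i then q i else 0) := by
      intro i
      by_cases hki : k = i <;> simp [hki]
    simp only [this, Finset.sum_sub_distrib, Finset.sum_ite_eq, Finset.mem_univ, if_true]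
  have key : ∀ x, (∑ i, p x i * (if h x = i then 0 else 1)) -
      (∑ i, p x i * (if hstar x = i then 0 else 1)) ≤
      (∑ i, pφ x i * (if h x = i then 0 else 1)) -
      (∑ i, pφ x i * (if hstar x = i then 0 else 1)) := by
    intro x
    rw [esum, esum, esum, esum]
    have hφstar : ∀ j, pφ x j ≤ pφ x (hstar x) := by
      have : hstar x ∈ {i | ∀ j, p x j ≤ p x i} := fun j => hstarmax x j
      rw [hargmax x] at this
      exact this
    have hsupp : Finset.univ.sup' Finset.univ_nonempty (p x) = p x (hstar x) :=
      le_antisymm (Finset.sup'_le _ _ fun j _ => hstarmax x j)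
        (Finset.le_sup' _ (Finset.mem_univ _))
    have hsuppφ : Finset.univ.sup' Finset.univ_nonempty (pφ x) = pφ x (hstar x) :=
      le_antisymm (Finset.sup'_le _ _ fun j _ => hφstar j)
        (Finset.le_sup' _ (Finset.mem_univ _))
    have := hmargin x (h x)
    rw [hsupp, hsuppφ] at this
    linarith
  have integ : ∀ (q : X → Fin m → ℝ), (∀ i, Measurable fun x => q x i) →
      (∀ x i, 0 ≤ q x i) → (∀ x, ∑ i, q x i = 1) → ∀ (g : X → Fin m), Measurable g →
      Integrable (fun x => ∑ i, q x i * (if g x = i then (0:ℝ) else 1)) μ := by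
    intro q hqmeas hq0 hq1 g hg
    have hm : Measurable fun x => ∑ i, q x i * (if g x = i then (0:ℝ) else 1) := by
      apply Finset.measurable_sum
      intro i _
      exact (hqmeas i).mul
        (Measurable.ite (hg (measurableSet_singleton i)) measurable_const measurable_const)
    refine (integrable_const (1:ℝ)).mono' hm.aestronglyMeasurable (ae_of_all _ fun x => ?_)
    have h0 : 0 ≤ ∑ i, q x i * (if g x = i then (0:ℝ) else 1) :=
      Finset.sum_nonneg fun i _ => mul_nonneg (hq0 x i) (by positivity)
    have h1 : (∑ i, q x i * (if g x = i then (0:ℝ) else 1)) ≤ 1 := by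
      calc (∑ i, q x i * (if g x = i then (0:ℝ) else 1)) ≤ ∑ i, q x i := by
            refine Finset.sum_le_sum fun i _ => ?_
            by_cases hgi : g x = i <;> simp [hgi, hq0 x i]
        _ = 1 := hq1 x
    rw [Real.norm_eq_abs, abs_of_nonneg h0]
    exact h1
  have i1 := integ p hpmeas hp0 hp1 h hmeas
  have i2 := integ p hpmeas hp0 hp1 hstar hstarmeas
  have i3 := integ pφ hpφmeas hpφ0 hpφ1 h hmeas
  have i4 := integ pφ hpφmeas hpφ0 hpφ1 hstar hstarmeas
  rw [← integral_sub i1 i2, ← integral_sub i3 i4]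
  exact integral_mono (i1.sub i2) (i3.sub i4) key
end

section
/- Combining the margin-preserving conditions and the teacher approximation bound: if p^φ satisfies the argmax-preservation and margin conditions relative to p*, and p^t: X → Δ^m is arbitrary, then for any classifier ĥ, R(ĥ) − R(h*) ≤ R^t(ĥ) − R^t(h*) + E_x[‖p^t(x) − p^φ(x)‖_1]. -/
open MeasureTheory

section Aux

variable {X : Type*} [MeasurableSpace X] {μ : Measure X} [IsProbabilityMeasure μ]
  {m : ℕ} [NeZero m]

lemma aux_le_one (q : X → Fin m → ℝ) (hq0 : ∀ x i, 0 ≤ q x i) (hq1 : ∀ x, ∑ i, q x i = 1)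
    (x : X) (i : Fin m) : q x i ≤ 1 := by
  have := Finset.single_le_sum (f := q x) (fun j _ => hq0 x j) (Finset.mem_univ i)
  rw [hq1 x] at this; exact this

lemma aux_sum_loss (q : X → Fin m → ℝ) (hq1 : ∀ x, ∑ i, q x i = 1) (g : X → Fin m) (x : X) :
    ∑ i, q x i * (if g x = i then 0 else 1) = 1 - q x (g x) := by
  have : ∑ i, q x i * (if g x = i then 0 else 1)
      = ∑ i, (q x i - if g x = i then q x i else 0) := by
    refine Finset.sum_congr rfl fun i _ => ?_
    by_cases hgi : g x = i <;> simp [hgi]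
  rw [this, Finset.sum_sub_distrib, hq1, Finset.sum_ite_eq]
  simp

lemma aux_integrable_loss (q : X → Fin m → ℝ) (hqmeas : ∀ i, Measurable fun x => q x i)
    (hq0 : ∀ x i, 0 ≤ q x i) (hq1 : ∀ x, ∑ i, q x i = 1)
    (g : X → Fin m) (gmeas : Measurable g) :
    Integrable (fun x => ∑ i, q x i * (if g x = i then 0 else 1)) μ := by
  have hmeas : Measurable (fun x => ∑ i, q x i * (if g x = i then 0 else 1)) := by
    apply Finset.measurable_sum
    intro i _
    exact (hqmeas i).mul
      (Measurable.ite (gmeas (MeasurableSet.singleton i)) measurable_const measurable_const)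
  refine ⟨hmeas.aestronglyMeasurable, ?_⟩
  apply HasFiniteIntegral.of_bounded (C := (1 : ℝ))
  filter_upwards with x
  rw [Real.norm_eq_abs, abs_le]
  constructor
  · have : (0:ℝ) ≤ ∑ i, q x i * (if g x = i then 0 else 1) := by
      apply Finset.sum_nonneg
      intro i _
      apply mul_nonneg (hq0 x i)
      split <;> norm_num
    linarith
  · calc ∑ i, q x i * (if g x = i then 0 else 1) ≤ ∑ i, q x i := by
          refine Finset.sum_le_sum fun i _ => ?_
          have : (if g x = i then (0:ℝ) else 1) ≤ 1 := by split <;> norm_num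
          nlinarith [hq0 x i]
      _ = 1 := hq1 x

lemma aux_integrable_abs (pt pφ : X → Fin m → ℝ)
    (hptmeas : ∀ i, Measurable fun x => pt x i) (hpφmeas : ∀ i, Measurable fun x => pφ x i)
    (hpt0 : ∀ x i, 0 ≤ pt x i) (hpt1 : ∀ x, ∑ i, pt x i = 1)
    (hpφ0 : ∀ x i, 0 ≤ pφ x i) (hpφ1 : ∀ x, ∑ i, pφ x i = 1) :
    Integrable (fun x => ∑ i, |pt x i - pφ x i|) μ := by
  have hmeas : Measurable (fun x => ∑ i, |pt x i - pφ x i|) := by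
    apply Finset.measurable_sum
    intro i _
    exact ((hptmeas i).sub (hpφmeas i)).abs
  refine ⟨hmeas.aestronglyMeasurable, ?_⟩
  apply HasFiniteIntegral.of_bounded (C := (2 * m : ℝ))
  filter_upwards with x
  rw [Real.norm_eq_abs]
  have h1 : ∑ i, |pt x i - pφ x i| ≤ ∑ _i : Fin m, (2:ℝ) := by
    refine Finset.sum_le_sum fun i _ => ?_
    have := aux_le_one pt hpt0 hpt1 x i
    have := aux_le_one pφ hpφ0 hpφ1 x i
    have := hpt0 x i; have := hpφ0 x i
    rw [abs_le]; constructor <;> linarith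
  have h0 : (0:ℝ) ≤ ∑ i, |pt x i - pφ x i| :=
    Finset.sum_nonneg fun i _ => abs_nonneg _
  rw [abs_of_nonneg h0]
  calc ∑ i, |pt x i - pφ x i| ≤ ∑ _i : Fin m, (2:ℝ) := h1
    _ = 2 * m := by simp [mul_comm]

end Aux

/-- Combining margin preservation and teacher approximation: if `pφ` preserves the
argmax set and margins of `p`, and `pt` is arbitrary, then for any classifier `h`,
`R(h) − R(h*) ≤ R^t(h) − R^t(h*) + E_x[‖pt(x) − pφ(x)‖₁]`. -/
theorem stmt8 {X : Type*} [MeasurableSpace X] (μ : Measure X) [IsProbabilityMeasure μ]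
    {m : ℕ} [NeZero m] (p pφ pt : X → Fin m → ℝ)
    (hpmeas : ∀ i, Measurable fun x => p x i)
    (hpφmeas : ∀ i, Measurable fun x => pφ x i)
    (hptmeas : ∀ i, Measurable fun x => pt x i)
    (hp0 : ∀ x i, 0 ≤ p x i) (hp1 : ∀ x, ∑ i, p x i = 1)
    (hpφ0 : ∀ x i, 0 ≤ pφ x i) (hpφ1 : ∀ x, ∑ i, pφ x i = 1)
    (hpt0 : ∀ x i, 0 ≤ pt x i) (hpt1 : ∀ x, ∑ i, pt x i = 1)
    (hargmax : ∀ x, {i | ∀ j, p x j ≤ p x i} = {i | ∀ j, pφ x j ≤ pφ x i})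
    (hmargin : ∀ x j, Finset.univ.sup' Finset.univ_nonempty (p x) - p x j ≤
      Finset.univ.sup' Finset.univ_nonempty (pφ x) - pφ x j)
    (hstar : X → Fin m) (hstarmeas : Measurable hstar)
    (hstarmax : ∀ x j, p x j ≤ p x (hstar x))
    (h : X → Fin m) (hmeas : Measurable h) :
    (∫ x, ∑ i, p x i * (if h x = i then 0 else 1) ∂μ) -
      (∫ x, ∑ i, p x i * (if hstar x = i then 0 else 1) ∂μ) ≤
    ((∫ x, ∑ i, pt x i * (if h x = i then 0 else 1) ∂μ) -
      (∫ x, ∑ i, pt x i * (if hstar x = i then 0 else 1) ∂μ)) +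
      ∫ x, ∑ i, |pt x i - pφ x i| ∂μ := by
  have I1 := aux_integrable_loss (μ := μ) p hpmeas hp0 hp1 h hmeas
  have I2 := aux_integrable_loss (μ := μ) p hpmeas hp0 hp1 hstar hstarmeas
  have I3 := aux_integrable_loss (μ := μ) pt hptmeas hpt0 hpt1 h hmeas
  have I4 := aux_integrable_loss (μ := μ) pt hptmeas hpt0 hpt1 hstar hstarmeas
  have I5 := aux_integrable_abs (μ := μ) pt pφ hptmeas hpφmeas hpt0 hpt1 hpφ0 hpφ1
  have key : ∀ x, (∑ i, p x i * (if h x = i then 0 else 1)) -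
      (∑ i, p x i * (if hstar x = i then 0 else 1)) ≤
      ((∑ i, pt x i * (if h x = i then 0 else 1)) -
        (∑ i, pt x i * (if hstar x = i then 0 else 1))) + ∑ i, |pt x i - pφ x i| := by
    intro x
    rw [aux_sum_loss p hp1 h x, aux_sum_loss p hp1 hstar x,
      aux_sum_loss pt hpt1 h x, aux_sum_loss pt hpt1 hstar x]
    -- reduce to: p(h*) - p(h) ≤ pt(h*) - pt(h) + ∑ |pt - pφ|
    have hsupp : Finset.univ.sup' Finset.univ_nonempty (p x) = p x (hstar x) := by
      apply le_antisymm
      · exact Finset.sup'_le _ _ fun j _ => hstarmax x j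
      · exact Finset.le_sup' _ (Finset.mem_univ _)
    have hstarφ : ∀ j, pφ x j ≤ pφ x (hstar x) := by
      have hmem : hstar x ∈ {i | ∀ j, p x j ≤ p x i} := fun j => hstarmax x j
      rw [hargmax x] at hmem
      exact hmem
    have hsuppφ : Finset.univ.sup' Finset.univ_nonempty (pφ x) = pφ x (hstar x) := by
      apply le_antisymm
      · exact Finset.sup'_le _ _ fun j _ => hstarφ j
      · exact Finset.le_sup' _ (Finset.mem_univ _)
    have hm := hmargin x (h x)
    rw [hsupp, hsuppφ] at hm
    -- p(h*) - p(h) ≤ pφ(h*) - pφ(h)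
    have habs : pφ x (hstar x) - pφ x (h x) ≤
        pt x (hstar x) - pt x (h x) + ∑ i, |pt x i - pφ x i| := by
      by_cases heq : hstar x = h x
      · rw [heq]
        have : (0:ℝ) ≤ ∑ i, |pt x i - pφ x i| :=
          Finset.sum_nonneg fun i _ => abs_nonneg _
        linarith
      · have hsub : |pt x (hstar x) - pφ x (hstar x)| + |pt x (h x) - pφ x (h x)| ≤
            ∑ i, |pt x i - pφ x i| := by
          have : ∑ i ∈ ({hstar x, h x} : Finset (Fin m)), |pt x i - pφ x i| ≤
              ∑ i, |pt x i - pφ x i| := by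
            apply Finset.sum_le_sum_of_subset_of_nonneg (Finset.subset_univ _)
            intro i _ _; exact abs_nonneg _
          rwa [Finset.sum_pair heq] at this
        have a1 := neg_abs_le (pt x (hstar x) - pφ x (hstar x))
        have a2 := le_abs_self (pt x (h x) - pφ x (h x))
        linarith
    linarith
  calc (∫ x, ∑ i, p x i * (if h x = i then 0 else 1) ∂μ) -
      (∫ x, ∑ i, p x i * (if hstar x = i then 0 else 1) ∂μ)
      = ∫ x, (∑ i, p x i * (if h x = i then 0 else 1)) -
          (∑ i, p x i * (if hstar x = i then 0 else 1)) ∂μ := (integral_sub I1 I2).symm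
    _ ≤ ∫ x, ((∑ i, pt x i * (if h x = i then 0 else 1)) -
          (∑ i, pt x i * (if hstar x = i then 0 else 1))) + ∑ i, |pt x i - pφ x i| ∂μ :=
        integral_mono (I1.sub I2) ((I3.sub I4).add I5) key
    _ = _ := by
        have ha := integral_add (μ := μ) (I3.sub I4) I5
        have hs := integral_sub (μ := μ) I3 I4
        simp only [Pi.sub_apply, Pi.add_apply] at ha hs
        rw [ha, hs]
end

section
/- Full excess-risk bound: under the margin-preserving conditions on p^φ, a finite hypothesis class H, and an i.i.d. sample of size n from D_X, with probability at least 1 − δ, the empirical minimizer ĥ of the teacher-distilled empirical risk satisfies R(ĥ) − R(h*) ≤ 2√(log(2|H|/δ)/(2n)) + (min_{h∈H} R^t(h) − inf_{h: X→[m]} R^t(h)) + E_x[‖p^t(x) − p^φ(x)‖_1]. -/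
open Real MeasureTheory
open Real

lemma hoeff_bern {p : ℝ} (hp0 : 0 ≤ p) (hp1 : p ≤ 1) {l : ℝ} (hl : 0 ≤ l) :
    1 - p + p * Real.exp l ≤ Real.exp (l * p + l ^ 2 / 8) := by
  set U : ℝ → ℝ := fun l => 1 - p + p * Real.exp l with hUdef
  have hUpos : ∀ y : ℝ, 0 < U y := by
    intro y
    rcases lt_or_eq_of_le hp1 with h | h
    · have := Real.exp_pos y
      have : 0 ≤ p * Real.exp y := mul_nonneg hp0 (Real.exp_pos y).le
      simp only [hUdef]; linarith
    · simp only [hUdef, h]; simpa using Real.exp_pos y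
  have hU : ∀ y : ℝ, HasDerivAt U (p * Real.exp y) y := by
    intro y
    exact ((Real.hasDerivAt_exp y).const_mul p).const_add (1 - p)
  set f : ℝ → ℝ := fun l => l * p + l ^ 2 / 8 - Real.log (U l) with hfdef
  set f' : ℝ → ℝ := fun l => p + l / 4 - p * Real.exp l / U l with hf'def
  have hf : ∀ y : ℝ, HasDerivAt f (f' y) y := by
    intro y
    have h1 : HasDerivAt (fun l : ℝ => l * p) p y := by
      simpa using (hasDerivAt_id y).mul_const p
    have h2 : HasDerivAt (fun l : ℝ => l ^ 2 / 8) (y / 4) y := by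
      have := (hasDerivAt_pow 2 y).div_const 8
      exact this.congr_deriv (by rw [show (2:ℕ) - 1 = 1 from rfl, pow_one]; push_cast; ring)
    have h3 : HasDerivAt (fun l => Real.log (U l)) (p * Real.exp y / U y) y :=
      (hU y).log (hUpos y).ne'
    have := (h1.add h2).sub h3
    exact this
  have hf'' : ∀ y : ℝ, HasDerivAt f'
      (1 / 4 - (p * Real.exp y * U y - p * Real.exp y * (p * Real.exp y)) / (U y) ^ 2) y := by
    intro y
    have hnum : HasDerivAt (fun l : ℝ => p * Real.exp l) (p * Real.exp y) y :=
      (Real.hasDerivAt_exp y).const_mul p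
    have hq : HasDerivAt (fun l => p * Real.exp l / U l)
        ((p * Real.exp y * U y - p * Real.exp y * (p * Real.exp y)) / (U y) ^ 2) y :=
      hnum.div (hU y) (hUpos y).ne'
    have h2 : HasDerivAt (fun l : ℝ => p + l / 4) (1 / 4) y := by
      simpa using ((hasDerivAt_id y).div_const 4).const_add p
    exact h2.sub hq
  have hf''nonneg : ∀ y : ℝ,
      0 ≤ 1 / 4 - (p * Real.exp y * U y - p * Real.exp y * (p * Real.exp y)) / (U y) ^ 2 := by
    intro y
    rw [sub_nonneg, div_le_iff₀ (by have := hUpos y; positivity : (0:ℝ) < (U y) ^ 2)]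
    have hUy : U y = 1 - p + p * Real.exp y := rfl
    nlinarith [sq_nonneg ((1 - p) - p * Real.exp y), Real.exp_pos y]
  have hf'mono : Monotone f' := by
    apply monotone_of_deriv_nonneg
    · exact fun y => (hf'' y).differentiableAt
    · intro y; rw [(hf'' y).deriv]; exact hf''nonneg y
  have hf'0 : f' 0 = 0 := by
    simp only [hf'def]
    rw [Real.exp_zero]
    have : U 0 = 1 := by simp [hUdef]
    rw [this]; ring
  have hf'nonneg : ∀ y ∈ Set.Ici (0:ℝ), 0 ≤ f' y := fun y hy => hf'0 ▸ hf'mono hy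
  have hfmono : MonotoneOn f (Set.Ici 0) := by
    apply monotoneOn_of_deriv_nonneg (convex_Ici 0)
    · exact fun y _ => ((hf y).differentiableAt.continuousAt).continuousWithinAt
    · intro y _; exact (hf y).differentiableAt.differentiableWithinAt
    · intro y hy
      rw [(hf y).deriv]
      exact hf'nonneg y (le_of_lt (by simpa using hy))
  have hf0 : f 0 = 0 := by simp [hfdef, hUdef]
  have hfl : 0 ≤ f l := hf0 ▸ hfmono Set.self_mem_Ici hl hl
  have hlog : Real.log (U l) ≤ l * p + l ^ 2 / 8 := by
    simp only [hfdef] at hfl; linarith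
  calc U l = Real.exp (Real.log (U l)) := (Real.exp_log (hUpos l)).symm
    _ ≤ _ := Real.exp_le_exp.mpr hlog

lemma chernoff_upper {X : Type*} [MeasurableSpace X] (μ : Measure X) [IsProbabilityMeasure μ]
    (f : X → ℝ) (hmeas : Measurable f) (h0 : ∀ x, 0 ≤ f x) (h1 : ∀ x, f x ≤ 1)
    (n : ℕ) (hn : 0 < n) (t : ℝ) (ht : 0 ≤ t) :
    (Measure.pi fun _ : Fin n => μ) {xs | (∫ x, f x ∂μ) + t ≤ (1 / n) * ∑ k : Fin n, f (xs k)} ≤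
      ENNReal.ofReal (Real.exp (-2 * n * t ^ 2)) := by
  letI : MeasureSpace X := ⟨μ⟩
  haveI : SigmaFinite (volume : Measure X) := inferInstance
  set R : ℝ := ∫ x, f x ∂μ with hR
  set l : ℝ := 4 * t with hl
  have hl0 : 0 ≤ l := by positivity
  -- integrability of f
  have hfint : Integrable f μ := by
    refine (integrable_const (1:ℝ)).mono' hmeas.aestronglyMeasurable ?_
    exact Filter.Eventually.of_forall fun x => by rw [Real.norm_eq_abs, abs_le]; exact ⟨by linarith [h0 x], h1 x⟩
  have hR0 : 0 ≤ R := integral_nonneg fun x => h0 x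
  have hR1 : R ≤ 1 := by
    calc R ≤ ∫ _, (1:ℝ) ∂μ := integral_mono hfint (integrable_const 1) h1
      _ = 1 := by simp
  -- mgf bound
  have hexpint : Integrable (fun x => Real.exp (l * f x)) μ := by
    refine (integrable_const (Real.exp l)).mono' (hmeas.const_mul l).exp.aestronglyMeasurable ?_
    refine Filter.Eventually.of_forall fun x => ?_
    rw [Real.norm_eq_abs, abs_of_pos (Real.exp_pos _)]
    exact Real.exp_le_exp.mpr (by nlinarith [h0 x, h1 x])
  have hmgf : ∫ x, Real.exp (l * f x) ∂μ ≤ Real.exp (l * R + l ^ 2 / 8) := by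
    have hpt : ∀ x, Real.exp (l * f x) ≤ 1 - f x + f x * Real.exp l := by
      intro x
      have := convexOn_exp.2 (Set.mem_univ (0:ℝ)) (Set.mem_univ l)
        (by linarith [h1 x] : (0:ℝ) ≤ 1 - f x) (h0 x) (by ring)
      simpa [mul_comm] using this
    have h2 : ∫ x, Real.exp (l * f x) ∂μ ≤ ∫ x, (1 - f x + f x * Real.exp l) ∂μ := by
      refine integral_mono hexpint ?_ hpt
      exact ((integrable_const 1).sub hfint).add (hfint.mul_const _)
    have h3 : ∫ x, (1 - f x + f x * Real.exp l) ∂μ = 1 - R + R * Real.exp l := by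
      have heq : (fun x => 1 - f x + f x * Real.exp l) =
          fun x => 1 + f x * (Real.exp l - 1) := by funext x; ring
      rw [heq, integral_add (integrable_const 1) (hfint.mul_const _), integral_mul_const]
      simp only [integral_const, measure_univ, ENNReal.toReal_one, smul_eq_mul, one_mul, ← hR, probReal_univ]
      ring
    rw [h3] at h2
    calc ∫ x, Real.exp (l * f x) ∂μ ≤ 1 - R + R * Real.exp l := h2
      _ ≤ Real.exp (l * R + l ^ 2 / 8) := hoeff_bern hR0 hR1 hl0
  have hmgfpos : 0 < ∫ x, Real.exp (l * f x) ∂μ := by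
    have : (0:ℝ) < ∫ _, Real.exp (0:ℝ) ∂μ := by simp
    calc (0:ℝ) < ∫ _, Real.exp (l * 0) ∂μ := by simpa using this
      _ ≤ ∫ x, Real.exp (l * f x) ∂μ := by
          refine integral_mono (integrable_const _) hexpint fun x => ?_
          exact Real.exp_le_exp.mpr (by nlinarith [h0 x])
  -- product structure
  set P := (Measure.pi fun _ : Fin n => μ) with hP
  haveI : IsProbabilityMeasure P := by rw [hP]; infer_instance
  have hvol : (volume : Measure (Fin n → X)) = P := by
    rw [hP]; rfl
  set g : (Fin n → X) → ℝ := fun xs => ∏ k : Fin n, Real.exp (l * f (xs k)) with hg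
  have hgint : Integrable g P := by
    rw [← hvol]
    exact Integrable.fintype_prod (f := fun _ : Fin n => fun x => Real.exp (l * f x))
      (fun _ => hexpint)
  have hgintegral : ∫ xs, g xs ∂P = (∫ x, Real.exp (l * f x) ∂μ) ^ n := by
    rw [← hvol]
    have := integral_fintype_prod_eq_pow (𝕜 := ℝ) (ι := Fin n) (μ := μ) (fun x => Real.exp (l * f x))
    rw [hvol]; simpa using this
  -- Markov
  set c : ℝ := Real.exp (l * (n * (R + t))) with hc
  have hcpos : 0 < c := Real.exp_pos _
  have hsub : {xs : Fin n → X | R + t ≤ (1 / n) * ∑ k : Fin n, f (xs k)} ⊆ {xs | c ≤ g xs} := by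
    intro xs hxs
    simp only [Set.mem_setOf_eq] at hxs ⊢
    have hn' : (0:ℝ) < n := by exact_mod_cast hn
    have hsum : (n:ℝ) * (R + t) ≤ ∑ k : Fin n, f (xs k) := by
      calc (n:ℝ) * (R + t) ≤ n * ((1 / n) * ∑ k : Fin n, f (xs k)) :=
            mul_le_mul_of_nonneg_left hxs hn'.le
        _ = ∑ k : Fin n, f (xs k) := by field_simp
    have : g xs = Real.exp (l * ∑ k : Fin n, f (xs k)) := by
      simp only [hg, ← Real.exp_sum, Finset.mul_sum]
    rw [this, hc]
    exact Real.exp_le_exp.mpr (by nlinarith)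
  have hmarkov := mul_meas_ge_le_integral_of_nonneg
    (μ := P) (f := g)
    (Filter.Eventually.of_forall fun xs => Finset.prod_nonneg fun k _ => (Real.exp_pos _).le)
    hgint c
  have hPfin : P {xs | c ≤ g xs} ≠ ⊤ := measure_ne_top _ _
  have hPle : (P {xs | R + t ≤ (1/n) * ∑ k : Fin n, f (xs k)}).toReal ≤ Real.exp (-2 * n * t ^ 2) := by
    have h1 : (P {xs | R + t ≤ (1/n) * ∑ k : Fin n, f (xs k)}).toReal ≤ (P {xs | c ≤ g xs}).toReal := by
      exact ENNReal.toReal_mono hPfin (measure_mono hsub)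
    have h2 : (P {xs | c ≤ g xs}).toReal ≤ (∫ xs, g xs ∂P) / c := by
      rw [le_div_iff₀ hcpos, mul_comm]; exact hmarkov
    have h3 : (∫ xs, g xs ∂P) / c ≤ Real.exp (-2 * n * t ^ 2) := by
      rw [div_le_iff₀ hcpos, hgintegral]
      calc (∫ x, Real.exp (l * f x) ∂μ) ^ n ≤ (Real.exp (l * R + l ^ 2 / 8)) ^ n :=
            pow_le_pow_left₀ hmgfpos.le hmgf n
        _ = Real.exp (n * (l * R + l ^ 2 / 8)) := by rw [← Real.exp_nat_mul]
        _ = Real.exp (-2 * n * t ^ 2) * c := by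
            rw [hc, ← Real.exp_add]; congr 1; rw [hl]; ring
    linarith
  calc P {xs | R + t ≤ (1/n) * ∑ k : Fin n, f (xs k)}
      = ENNReal.ofReal (P {xs | R + t ≤ (1/n) * ∑ k : Fin n, f (xs k)}).toReal := by
        rw [ENNReal.ofReal_toReal (measure_ne_top _ _)]
    _ ≤ ENNReal.ofReal (Real.exp (-2 * n * t ^ 2)) := ENNReal.ofReal_le_ofReal hPle

set_option maxHeartbeats 2000000 in
/-- Full excess-risk bound: under the margin-preserving conditions on `pφ`, a finite
hypothesis class `H`, and an i.i.d. sample of size `n`, with probability at least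
`1 − δ` the empirical minimizer `hhat` of the teacher-distilled empirical risk satisfies
`R(hhat) − R(h*) ≤ 2√(log(2|H|/δ)/(2n)) + (min_{h∈H} R^t(h) − inf_h R^t(h)) + E‖pt − pφ‖₁`. -/
theorem stmt11 {X : Type*} [MeasurableSpace X] (μ : Measure X) [IsProbabilityMeasure μ]
    {m : ℕ} [NeZero m] (p pφ pt : X → Fin m → ℝ)
    (hpmeas : ∀ i, Measurable fun x => p x i)
    (hpφmeas : ∀ i, Measurable fun x => pφ x i)
    (hptmeas : ∀ i, Measurable fun x => pt x i)
    (hp0 : ∀ x i, 0 ≤ p x i) (hp1 : ∀ x, ∑ i, p x i = 1)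
    (hpφ0 : ∀ x i, 0 ≤ pφ x i) (hpφ1 : ∀ x, ∑ i, pφ x i = 1)
    (hpt0 : ∀ x i, 0 ≤ pt x i) (hpt1 : ∀ x, ∑ i, pt x i = 1)
    (hargmax : ∀ x, {i | ∀ j, p x j ≤ p x i} = {i | ∀ j, pφ x j ≤ pφ x i})
    (hmargin : ∀ x j, Finset.univ.sup' Finset.univ_nonempty (p x) - p x j ≤
      Finset.univ.sup' Finset.univ_nonempty (pφ x) - pφ x j)
    (hstar : X → Fin m) (hstarmeas : Measurable hstar)
    (hstarmax : ∀ x j, p x j ≤ p x (hstar x))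
    (H : Finset (X → Fin m)) (hHne : H.Nonempty) (hHmeas : ∀ h ∈ H, Measurable h)
    (n : ℕ) (hn : 0 < n) (δ : ℝ) (hδ : δ ∈ Set.Ioo (0 : ℝ) 1)
    (hhat : (Fin n → X) → X → Fin m)
    (hhatH : ∀ xs, hhat xs ∈ H)
    (hERM : ∀ xs, ∀ h ∈ H,
      (1 / n) * ∑ k : Fin n, ∑ i, pt (xs k) i * (if hhat xs (xs k) = i then 0 else 1) ≤
        (1 / n) * ∑ k : Fin n, ∑ i, pt (xs k) i * (if h (xs k) = i then 0 else 1)) :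
    ENNReal.ofReal (1 - δ) ≤
      (Measure.pi fun _ : Fin n => μ) {xs |
        (∫ x, ∑ i, p x i * (if hhat xs x = i then 0 else 1) ∂μ) -
            (∫ x, ∑ i, p x i * (if hstar x = i then 0 else 1) ∂μ) ≤
          2 * Real.sqrt (Real.log (2 * H.card / δ) / (2 * n)) +
            (H.inf' hHne (fun h => ∫ x, ∑ i, pt x i * (if h x = i then 0 else 1) ∂μ) -
              ⨅ h : X → Fin m, ∫ x, ∑ i, pt x i * (if h x = i then 0 else 1) ∂μ) +
            ∫ x, ∑ i, |pt x i - pφ x i| ∂μ} := by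
  have hn' : (0:ℝ) < n := by exact_mod_cast hn
  set t : ℝ := Real.sqrt (Real.log (2 * H.card / δ) / (2 * n)) with htdef
  have ht0 : 0 ≤ t := Real.sqrt_nonneg _
  -- loss functions
  set L : (X → Fin m → ℝ) → (X → Fin m) → X → ℝ :=
    fun q g x => ∑ i, q x i * (if g x = i then 0 else 1) with hLdef
  -- pointwise simplification of the loss
  have hLsimp : ∀ (q : X → Fin m → ℝ), (∀ x, ∑ i, q x i = 1) →
      ∀ (g : X → Fin m) (x : X), L q g x = 1 - q x (g x) := by
    intro q hq g x
    have : ∀ i, q x i * (if g x = i then (0:ℝ) else 1)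
        = q x i - (if g x = i then q x i else 0) := by
      intro i; by_cases h : g x = i <;> simp [h]
    simp only [hLdef, this, Finset.sum_sub_distrib, hq x, Finset.sum_ite_eq, Finset.mem_univ,
      if_true]
  -- bounds on the loss
  have hL0 : ∀ (q : X → Fin m → ℝ), (∀ x i, 0 ≤ q x i) → ∀ g x, 0 ≤ L q g x := by
    intro q hq g x
    exact Finset.sum_nonneg fun i _ => mul_nonneg (hq x i) (by positivity)
  have hL1 : ∀ (q : X → Fin m → ℝ), (∀ x i, 0 ≤ q x i) → (∀ x, ∑ i, q x i = 1) →
      ∀ g x, L q g x ≤ 1 := by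
    intro q hq hq1 g x
    calc L q g x ≤ ∑ i, q x i := Finset.sum_le_sum fun i _ => by
          by_cases h : g x = i <;> simp [h, hq x i]
      _ = 1 := hq1 x
  -- measurability and integrability of losses
  have hLmeas : ∀ (q : X → Fin m → ℝ), (∀ i, Measurable fun x => q x i) →
      ∀ (g : X → Fin m), Measurable g → Measurable (L q g) := by
    intro q hq g hg
    apply Finset.measurable_sum
    intro i _
    exact (hq i).mul (Measurable.ite (hg (measurableSet_singleton i)) measurable_const
      measurable_const)
  have hLint : ∀ (q : X → Fin m → ℝ) (h0 : ∀ x i, 0 ≤ q x i) (h1 : ∀ x, ∑ i, q x i = 1)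
      (hq : ∀ i, Measurable fun x => q x i) (g : X → Fin m) (hg : Measurable g),
      Integrable (L q g) μ := by
    intro q h0 h1 hq g hg
    refine (integrable_const (1:ℝ)).mono' (hLmeas q hq g hg).aestronglyMeasurable ?_
    refine Filter.Eventually.of_forall fun x => ?_
    rw [Real.norm_eq_abs, abs_of_nonneg (hL0 q h0 g x)]
    exact hL1 q h0 h1 g x
  -- the ℓ¹ distance function
  set D : X → ℝ := fun x => ∑ i, |pt x i - pφ x i| with hDdef
  have hD0 : ∀ x, 0 ≤ D x := fun x => Finset.sum_nonneg fun i _ => abs_nonneg _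
  have hDmeas : Measurable D :=
    Finset.measurable_sum _ fun i _ => ((hptmeas i).sub (hpφmeas i)).abs
  have hDint : Integrable D μ := by
    refine (integrable_const (2:ℝ)).mono' hDmeas.aestronglyMeasurable ?_
    refine Filter.Eventually.of_forall fun x => ?_
    rw [Real.norm_eq_abs, abs_of_nonneg (hD0 x)]
    calc D x ≤ ∑ i, (pt x i + pφ x i) := Finset.sum_le_sum fun i _ => by
          rw [abs_sub_le_iff]; constructor <;> nlinarith [hpt0 x i, hpφ0 x i]
      _ = 2 := by rw [Finset.sum_add_distrib, hpt1 x, hpφ1 x]; norm_num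
  -- key pointwise inequality
  have hkey : ∀ (g : X → Fin m) (x : X),
      p x (hstar x) - p x (g x) ≤ (pt x (hstar x) - pt x (g x)) + D x := by
    intro g x
    have hstarφ : ∀ j, pφ x j ≤ pφ x (hstar x) := by
      have hmem : hstar x ∈ {i | ∀ j, p x j ≤ p x i} := fun j => hstarmax x j
      rw [hargmax x] at hmem
      exact hmem
    have hsupp : Finset.univ.sup' Finset.univ_nonempty (p x) = p x (hstar x) :=
      le_antisymm (Finset.sup'_le _ _ fun j _ => hstarmax x j)
        (Finset.le_sup' _ (Finset.mem_univ _))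
    have hsuppφ : Finset.univ.sup' Finset.univ_nonempty (pφ x) = pφ x (hstar x) :=
      le_antisymm (Finset.sup'_le _ _ fun j _ => hstarφ j)
        (Finset.le_sup' _ (Finset.mem_univ _))
    have step1 : p x (hstar x) - p x (g x) ≤ pφ x (hstar x) - pφ x (g x) := by
      have := hmargin x (g x)
      rw [hsupp, hsuppφ] at this
      exact this
    have step2 : pφ x (hstar x) - pφ x (g x) ≤ (pt x (hstar x) - pt x (g x)) + D x := by
      by_cases heq : hstar x = g x
      · rw [heq]; simpa using hD0 x
      · have h1 : pφ x (hstar x) - pt x (hstar x) ≤ |pt x (hstar x) - pφ x (hstar x)| := by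
          rw [abs_sub_comm]; exact le_abs_self _
        have h2 : pt x (g x) - pφ x (g x) ≤ |pt x (g x) - pφ x (g x)| := le_abs_self _
        have hpair : |pt x (hstar x) - pφ x (hstar x)| + |pt x (g x) - pφ x (g x)| ≤ D x := by
          have := Finset.sum_pair (f := fun i => |pt x i - pφ x i|) heq
          rw [hDdef, ← this]
          exact Finset.sum_le_sum_of_subset_of_nonneg (Finset.subset_univ _)
            fun i _ _ => abs_nonneg _
        linarith
    linarith
  -- true and empirical teacher risks
  have hcard1 : (1:ℝ) ≤ H.card := by exact_mod_cast hHne.card_pos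
  have hcardpos : (0:ℝ) < H.card := by linarith
  have hcgt1 : (1:ℝ) ≤ 2 * H.card / δ := by
    rw [le_div_iff₀ hδ.1]
    nlinarith [hδ.2]
  have hcpos : (0:ℝ) < 2 * H.card / δ := by positivity
  have hexp : Real.exp (-2 * n * t ^ 2) = δ / (2 * H.card) := by
    have harg : 0 ≤ Real.log (2 * H.card / δ) / (2 * n) :=
      div_nonneg (Real.log_nonneg hcgt1) (by positivity)
    have ht2 : t ^ 2 = Real.log (2 * H.card / δ) / (2 * n) := Real.sq_sqrt harg
    have : -2 * n * t ^ 2 = -Real.log (2 * H.card / δ) := by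
      rw [ht2]; field_simp
    rw [this, Real.exp_neg, Real.exp_log hcpos, inv_div]
  -- bad events
  set badU : (X → Fin m) → Set (Fin n → X) := fun h =>
    {xs | (∫ x, L pt h x ∂μ) + t ≤ (1 / n) * ∑ k : Fin n, L pt h (xs k)} with hbadU
  set badL : (X → Fin m) → Set (Fin n → X) := fun h =>
    {xs | (∫ x, (1 - L pt h x) ∂μ) + t ≤ (1 / n) * ∑ k : Fin n, (1 - L pt h (xs k))} with hbadL
  have hbadUle : ∀ h ∈ H, (Measure.pi fun _ : Fin n => μ) (badU h) ≤
      ENNReal.ofReal (δ / (2 * H.card)) := by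
    intro h hh
    rw [← hexp]
    exact chernoff_upper μ (L pt h) (hLmeas pt hptmeas h (hHmeas h hh)) (hL0 pt hpt0 h)
      (hL1 pt hpt0 hpt1 h) n hn t ht0
  have hbadLle : ∀ h ∈ H, (Measure.pi fun _ : Fin n => μ) (badL h) ≤
      ENNReal.ofReal (δ / (2 * H.card)) := by
    intro h hh
    rw [← hexp]
    exact chernoff_upper μ (fun x => 1 - L pt h x)
      (measurable_const.sub (hLmeas pt hptmeas h (hHmeas h hh)))
      (fun x => by show (0:ℝ) ≤ 1 - L pt h x; linarith [hL1 pt hpt0 hpt1 h x])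
      (fun x => by show 1 - L pt h x ≤ 1; linarith [hL0 pt hpt0 h x]) n hn t ht0
  -- measurability of bad events
  have hSmeas : ∀ h ∈ H, Measurable (fun xs : Fin n → X => ∑ k : Fin n, L pt h (xs k)) := by
    intro h hh
    exact Finset.measurable_sum _ fun k _ =>
      (hLmeas pt hptmeas h (hHmeas h hh)).comp (measurable_pi_apply k)
  have hbadUmeas : ∀ h ∈ H, MeasurableSet (badU h) := by
    intro h hh
    exact measurableSet_le measurable_const (measurable_const.mul (hSmeas h hh))
  have hbadLmeas : ∀ h ∈ H, MeasurableSet (badL h) := by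
    intro h hh
    have : Measurable (fun xs : Fin n → X => (1:ℝ) / n * ∑ k : Fin n, (1 - L pt h (xs k))) := by
      apply measurable_const.mul
      exact Finset.measurable_sum _ fun k _ =>
        measurable_const.sub ((hLmeas pt hptmeas h (hHmeas h hh)).comp (measurable_pi_apply k))
    exact measurableSet_le measurable_const this
  -- union bound
  set B : Set (Fin n → X) := ⋃ h ∈ H, (badU h ∪ badL h) with hBdef
  have hBmeas : MeasurableSet B := by
    apply Set.Finite.measurableSet_biUnion H.finite_toSet
    intro h hh
    exact (hbadUmeas h hh).union (hbadLmeas h hh)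
  have hBle : (Measure.pi fun _ : Fin n => μ) B ≤ ENNReal.ofReal δ := by
    calc (Measure.pi fun _ : Fin n => μ) B
        ≤ ∑ h ∈ H, (Measure.pi fun _ : Fin n => μ) (badU h ∪ badL h) :=
          measure_biUnion_finset_le H _
      _ ≤ ∑ h ∈ H, ENNReal.ofReal (δ / H.card) := by
          apply Finset.sum_le_sum
          intro h hh
          calc (Measure.pi fun _ : Fin n => μ) (badU h ∪ badL h)
              ≤ (Measure.pi fun _ : Fin n => μ) (badU h) +
                (Measure.pi fun _ : Fin n => μ) (badL h) := measure_union_le _ _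
            _ ≤ ENNReal.ofReal (δ / (2 * H.card)) + ENNReal.ofReal (δ / (2 * H.card)) :=
                add_le_add (hbadUle h hh) (hbadLle h hh)
            _ = ENNReal.ofReal (δ / H.card) := by
                have hc0 : (H.card : ℝ) ≠ 0 := hcardpos.ne'
                have hnn : (0:ℝ) ≤ δ / (2 * H.card) := div_nonneg hδ.1.le (by linarith)
                rw [← ENNReal.ofReal_add hnn hnn]
                congr 1
                field_simp
                ring
      _ = H.card • ENNReal.ofReal (δ / H.card) := by rw [Finset.sum_const]
      _ = ENNReal.ofReal δ := by
          have hc0 : (H.card : ℝ) ≠ 0 := hcardpos.ne'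
          rw [nsmul_eq_mul, ← ENNReal.ofReal_natCast H.card,
            ← ENNReal.ofReal_mul (by positivity)]
          congr 1
          field_simp
  -- the good event is contained in the target event
  have hsubset : Bᶜ ⊆ {xs : Fin n → X |
      (∫ x, ∑ i, p x i * (if hhat xs x = i then 0 else 1) ∂μ) -
          (∫ x, ∑ i, p x i * (if hstar x = i then 0 else 1) ∂μ) ≤
        2 * t +
          (H.inf' hHne (fun h => ∫ x, ∑ i, pt x i * (if h x = i then 0 else 1) ∂μ) -
            ⨅ h : X → Fin m, ∫ x, ∑ i, pt x i * (if h x = i then 0 else 1) ∂μ) +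
          ∫ x, ∑ i, |pt x i - pφ x i| ∂μ} := by
    intro xs hxs
    simp only [hBdef, Set.compl_iUnion, Set.mem_iInter, Set.mem_compl_iff, Set.mem_union,
      not_or] at hxs
    -- deviations on the good event
    have hdev : ∀ h ∈ H,
        (1 / n) * (∑ k : Fin n, L pt h (xs k)) < (∫ x, L pt h x ∂μ) + t ∧
         (∫ x, L pt h x ∂μ) - t < (1 / n) * (∑ k : Fin n, L pt h (xs k)) := by
      intro h hh
      obtain ⟨hU, hL'⟩ := hxs h hh
      constructor
      · simp only [hbadU, Set.mem_setOf_eq, not_le] at hU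
        linarith
      · simp only [hbadL, Set.mem_setOf_eq, not_le] at hL'
        have hint : ∫ x, (1 - L pt h x) ∂μ = 1 - ∫ x, L pt h x ∂μ := by
          rw [integral_sub (integrable_const 1)
            (hLint pt hpt0 hpt1 hptmeas h (hHmeas h hh))]
          simp
        have hsum : ∑ k : Fin n, (1 - L pt h (xs k)) =
            n - ∑ k : Fin n, L pt h (xs k) := by
          rw [Finset.sum_sub_distrib]
          simp
        rw [hint, hsum] at hL'
        have : 1 - (1/n) * ∑ k : Fin n, L pt h (xs k) <
            1 - (∫ x, L pt h x ∂μ) + t := by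
          have hexpand : (1/(n:ℝ)) * ((n:ℝ) - ∑ k : Fin n, L pt h (xs k)) =
              1 - (1/n) * ∑ k : Fin n, L pt h (xs k) := by
            field_simp
          linarith [hexpand ▸ hL']
        linarith
    -- abbreviations
    have hg := hhatH xs
    obtain ⟨h₀, hh₀, hinf₀⟩ := Finset.exists_mem_eq_inf' hHne
      (fun h => ∫ x, ∑ i, pt x i * (if h x = i then 0 else 1) ∂μ)
    -- empirical risk chain
    have hRthat : (∫ x, L pt (hhat xs) x ∂μ) ≤ (∫ x, L pt h₀ x ∂μ) + 2 * t := by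
      obtain ⟨hd1, hd2⟩ := hdev (hhat xs) hg
      obtain ⟨he1, he2⟩ := hdev h₀ hh₀
      have herm := hERM xs h₀ hh₀
      simp only [hLdef] at hd2 he1 herm ⊢
      linarith
    -- infimum over all classifiers is below the risk of hstar
    have hbddbelow : BddBelow (Set.range
        (fun h : X → Fin m => ∫ x, ∑ i, pt x i * (if h x = i then 0 else 1) ∂μ)) := by
      refine ⟨0, ?_⟩
      rintro _ ⟨h, rfl⟩
      exact integral_nonneg fun x => hL0 pt hpt0 h x
    have hinfle : (⨅ h : X → Fin m, ∫ x, ∑ i, pt x i * (if h x = i then 0 else 1) ∂μ) ≤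
        ∫ x, L pt hstar x ∂μ := ciInf_le hbddbelow hstar
    -- deterministic risk transfer
    have hghmeas : Measurable (hhat xs) := hHmeas _ hg
    have hIppg := hLint p hp0 hp1 hpmeas (hhat xs) hghmeas
    have hIpps := hLint p hp0 hp1 hpmeas hstar hstarmeas
    have hItg := hLint pt hpt0 hpt1 hptmeas (hhat xs) hghmeas
    have hIts := hLint pt hpt0 hpt1 hptmeas hstar hstarmeas
    have htransfer : (∫ x, L p (hhat xs) x ∂μ) - (∫ x, L p hstar x ∂μ) ≤
        (∫ x, L pt (hhat xs) x ∂μ) - (∫ x, L pt hstar x ∂μ) + ∫ x, D x ∂μ := by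
      have hmono : ∫ x, (L p (hhat xs) x + L pt hstar x) ∂μ ≤
          ∫ x, (L pt (hhat xs) x + L p hstar x + D x) ∂μ := by
        refine integral_mono (hIppg.add hIts) ((hItg.add hIpps).add hDint) fun x => ?_
        have hk := hkey (hhat xs) x
        rw [hLsimp p hp1 (hhat xs) x, hLsimp p hp1 hstar x,
          hLsimp pt hpt1 (hhat xs) x, hLsimp pt hpt1 hstar x]
        linarith
      have e1 : ∫ x, (L p (hhat xs) x + L pt hstar x) ∂μ =
          (∫ x, L p (hhat xs) x ∂μ) + ∫ x, L pt hstar x ∂μ := integral_add hIppg hIts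
      have eA : ∫ x, (L pt (hhat xs) x + L p hstar x) ∂μ =
          (∫ x, L pt (hhat xs) x ∂μ) + ∫ x, L p hstar x ∂μ := integral_add hItg hIpps
      have e2 : ∫ x, (L pt (hhat xs) x + L p hstar x + D x) ∂μ =
          (∫ x, (L pt (hhat xs) x + L p hstar x) ∂μ) + ∫ x, D x ∂μ :=
        integral_add (hItg.add hIpps) hDint
      linarith
    -- conclude
    simp only [Set.mem_setOf_eq]
    have hgoal1 : (∫ x, L p (hhat xs) x ∂μ) =
        ∫ x, ∑ i, p x i * (if hhat xs x = i then 0 else 1) ∂μ := rfl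
    have hgoal2 : (∫ x, L p hstar x ∂μ) =
        ∫ x, ∑ i, p x i * (if hstar x = i then 0 else 1) ∂μ := rfl
    rw [← hgoal1, ← hgoal2, hinf₀]
    have hD : (∫ x, D x ∂μ) = ∫ x, ∑ i, |pt x i - pφ x i| ∂μ := rfl
    rw [← hD]
    have : (∫ x, L pt h₀ x ∂μ) =
        (fun h => ∫ x, ∑ i, pt x i * (if h x = i then 0 else 1) ∂μ) h₀ := rfl
    linarith [htransfer, hRthat, hinfle]
  -- finish
  calc ENNReal.ofReal (1 - δ) ≤ 1 - ENNReal.ofReal δ := by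
        rw [ENNReal.ofReal_sub _ hδ.1.le, ENNReal.ofReal_one]
    _ ≤ (Measure.pi fun _ : Fin n => μ) Bᶜ := by
        haveI : IsProbabilityMeasure (Measure.pi fun _ : Fin n => μ) := inferInstance
        rw [prob_compl_eq_one_sub hBmeas]
        exact tsub_le_tsub_left hBle 1
    _ ≤ _ := measure_mono hsubset
end
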